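/- Let 𝒜 be a finite nonempty set of attributes, each a function a : X → [0,1] on a set X of instances, and let μ be a self-dual monotone measure on 𝒜 (i.e., μ̄ = μ). Then for all x, y ∈ X, R^μ(x, y) = μ(𝒜) − d^μ(x, y). -/

import Mathlib

open Finset

/-- The set `{x*_k, …, x*_{n-1}}` (0-indexed): the image under the enumeration `e`
of the indices `≥ k`. -/
def upSet {X : Type*} [DecidableEq X] {n : ℕ} (e : Fin n ≃ X) (k : ℕ) : Finset X :=
  (Finset.univ.filter fun j : Fin n => k ≤ (j : ℕ)).image e

/-- The Choquet integral of `f` with respect to the set function `μ`, computed via an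
enumeration `e : Fin n ≃ X` (assumed to sort `f` nondecreasingly):
`∑ i, f(x*_i) · [μ(A*_i) − μ(A*_{i+1})]` where `A*_i = {x*_i, …, x*_{n-1}}`
(note `A*_n = ∅`, and `μ ∅ = 0` for a monotone measure). -/
def choquetSum {X : Type*} [DecidableEq X] {n : ℕ} (μ : Finset X → ℝ) (f : X → ℝ)
    (e : Fin n ≃ X) : ℝ :=
  ∑ i : Fin n, f (e i) * (μ (upSet e i) - μ (upSet e ((i : ℕ) + 1)))

/-- The dual measure `μ̄(A) := μ(X) − μ(X \ A)`. -/
def dualMeasure {X : Type*} [Fintype X] [DecidableEq X] (μ : Finset X → ℝ) :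
    Finset X → ℝ :=
  fun A => μ Finset.univ - μ (Finset.univ \ A)

lemma sorted_comp_eq {n : ℕ} {X : Type*} (f : X → ℝ) (e e' : Fin n ≃ X)
    (h : Monotone (f ∘ e)) (h' : Monotone (f ∘ e')) (i : Fin n) : f (e i) = f (e' i) := by
  have key : List.ofFn (f ∘ e) = List.ofFn (f ∘ e') := by
    apply List.Perm.eq_of_sortedLE (List.sortedLE_ofFn_iff.2 h) (List.sortedLE_ofFn_iff.2 h')
    have hσ : f ∘ e = (f ∘ e') ∘ (e.trans e'.symm) := by ext j; simp
    rw [hσ, List.ofFn_eq_map, List.ofFn_eq_map, ← List.map_map]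
    apply List.Perm.map
    rw [List.perm_ext_iff_of_nodup ((List.nodup_finRange n).map (e.trans e'.symm).injective)
      (List.nodup_finRange n)]
    intro a
    simp only [List.mem_map, List.mem_finRange, true_and, iff_true]
    exact ⟨(e.trans e'.symm).symm a, by simp⟩
  exact congrFun (List.ofFn_injective key) i

lemma mem_upSet {X : Type*} [DecidableEq X] {n : ℕ} (e : Fin n ≃ X) (k : ℕ) (a : X) :
    a ∈ upSet e k ↔ k ≤ ((e.symm a : Fin n) : ℕ) := by
  simp only [upSet, Finset.mem_image, Finset.mem_filter, Finset.mem_univ, true_and]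
  constructor
  · rintro ⟨j, hj, rfl⟩; simpa using hj
  · intro hk; exact ⟨e.symm a, hk, by simp⟩

lemma upSet_level {X : Type*} [DecidableEq X] {n : ℕ} (f : X → ℝ) (e : Fin n ≃ X)
    (h : Monotone (f ∘ e)) {k : ℕ} (hk : k < n) (hk1 : 1 ≤ k)
    (hlt : f (e ⟨k - 1, by omega⟩) < f (e ⟨k, hk⟩)) (a : X) :
    a ∈ upSet e k ↔ f (e ⟨k, hk⟩) ≤ f a := by
  rw [mem_upSet]
  constructor
  · intro hj
    have := h (show (⟨k, hk⟩ : Fin n) ≤ e.symm a from hj)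
    simpa using this
  · intro hf
    by_contra hlt2
    push_neg at hlt2
    have h2 : (e.symm a) ≤ (⟨k - 1, by omega⟩ : Fin n) := by
      rw [Fin.le_def]; simp; omega
    have := h h2
    simp only [Function.comp_apply, Equiv.apply_symm_apply] at this
    linarith

lemma abel_sum (F M : ℕ → ℝ) (n : ℕ) :
    ∑ k ∈ Finset.range n, F k * (M k - M (k + 1)) =
      F 0 * M 0 - F (n - 1) * M n + ∑ k ∈ Finset.Ico 1 n, (F k - F (k - 1)) * M k := by
  induction n with
  | zero => simp
  | succ n ih =>
    rw [Finset.sum_range_succ, ih]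
    rcases Nat.eq_zero_or_pos n with h | h
    · subst h; simp; ring
    · rw [Finset.sum_Ico_succ_top h]
      have : n + 1 - 1 = n := rfl
      rw [this]
      have hn1 : n - 1 + 1 = n := by omega
      ring_nf

lemma choquetSum_eq_of_monotone {X : Type*} [DecidableEq X] {n : ℕ} (μ : Finset X → ℝ)
    (f : X → ℝ) (e e' : Fin n ≃ X) (h : Monotone (f ∘ e)) (h' : Monotone (f ∘ e')) :
    choquetSum μ f e = choquetSum μ f e' := by
  classical
  have key : ∀ (ee : Fin n ≃ X),
      choquetSum μ f ee = ∑ k ∈ Finset.range n,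
        (if hk : k < n then f (ee ⟨k, hk⟩) else 0) *
          (μ (upSet ee k) - μ (upSet ee (k + 1))) := by
    intro ee
    rw [choquetSum, ← Fin.sum_univ_eq_sum_range
      (fun k => (if hk : k < n then f (ee ⟨k, hk⟩) else 0) * (μ (upSet ee k) - μ (upSet ee (k + 1))))]
    apply Finset.sum_congr rfl
    intro i _
    have : (if hk : (i:ℕ) < n then f (ee ⟨(i:ℕ), hk⟩) else 0) = f (ee i) := by
      rw [dif_pos i.isLt]
    rw [this]
  rw [key e, key e', abel_sum, abel_sum]
  have h0 : upSet e 0 = upSet e' 0 := by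
    ext a; simp [mem_upSet]
  have hn : upSet e n = upSet e' n := by
    ext a
    simp only [mem_upSet]
    constructor
    · intro hle; exact absurd ((e.symm a).isLt) (by omega)
    · intro hle; exact absurd ((e'.symm a).isLt) (by omega)
  have hrw : ∀ k, (if hk : k < n then f (e ⟨k, hk⟩) else 0)
      = (if hk : k < n then f (e' ⟨k, hk⟩) else 0) := by
    intro k
    rcases lt_or_ge k n with hk | hk
    · rw [dif_pos hk, dif_pos hk]; exact sorted_comp_eq f e e' h h' _
    · rw [dif_neg (not_lt.2 hk), dif_neg (not_lt.2 hk)]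
  simp only [hrw, h0, hn]
  congr 1
  apply Finset.sum_congr rfl
  intro k hk
  simp only [Finset.mem_Ico] at hk
  have hk1n : k - 1 < n := by omega
  rw [dif_pos hk.2, dif_pos hk1n]
  rcases eq_or_lt_of_le (show f (e' ⟨k-1, hk1n⟩) ≤ f (e' ⟨k, hk.2⟩) from
      h' (Fin.mk_le_mk.2 (by omega))) with heq | hlt
  · rw [heq]; ring
  · have hlt1 : f (e ⟨k-1, hk1n⟩) < f (e ⟨k, hk.2⟩) := by
      rw [sorted_comp_eq f e e' h h', sorted_comp_eq f e e' h h']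
      exact hlt
    congr 2
    ext a
    rw [upSet_level f e h hk.2 hk.1 hlt1, upSet_level f e' h' hk.2 hk.1 hlt,
      sorted_comp_eq f e e' h h']


/-- For a self-dual monotone measure `μ` on a finite nonempty set of
attributes `a : X → [0,1]`, the Choquet similarity and distance satisfy
`R^μ(x,y) = μ(𝒜) − d^μ(x,y)`. -/
theorem choquet_similarity_eq_measure_sub_distance_of_self_dual
    {I A : Type*} [Fintype A] [DecidableEq A] {n : ℕ} (hn : 0 < n)
    (val : A → I → ℝ) (hval : ∀ a x, val a x ∈ Set.Icc (0 : ℝ) 1)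
    (μ : Finset A → ℝ) (hμ_empty : μ ∅ = 0)
    (hμ_mono : ∀ S T : Finset A, S ⊆ T → μ S ≤ μ T)
    (hself_dual : ∀ S : Finset A, dualMeasure μ S = μ S)
    (x y : I)
    (e₁ : Fin n ≃ A) (hsort₁ : Monotone (fun i => 1 - |val (e₁ i) x - val (e₁ i) y|))
    (e₂ : Fin n ≃ A) (hsort₂ : Monotone (fun i => |val (e₂ i) x - val (e₂ i) y|)) :
    choquetSum μ (fun a => 1 - |val a x - val a y|) e₁ =
      μ Finset.univ - choquetSum μ (fun a => |val a x - val a y|) e₂ := by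
  classical
  set f : A → ℝ := fun a => |val a x - val a y| with hf
  set e₂' : Fin n ≃ A := Fin.revPerm.trans e₁ with he₂'
  have hsort₂' : Monotone (f ∘ e₂') := by
    intro i j hij
    have h1 : (Fin.rev j) ≤ (Fin.rev i) := Fin.rev_le_rev.2 hij
    have := hsort₁ h1
    simp only [Function.comp_apply, he₂', Equiv.trans_apply, Fin.revPerm_apply, hf]
    dsimp at this
    linarith
  -- dual formula
  have hdual : ∀ T : Finset A, μ (Finset.univ \ T) = μ Finset.univ - μ T := by
    intro T
    have := hself_dual T
    simp only [dualMeasure] at this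
    linarith
  -- complement of upSets
  have hcompl : ∀ k : ℕ, k ≤ n → upSet e₂' k = Finset.univ \ upSet e₁ (n - k) := by
    intro k hk
    ext a
    simp only [mem_upSet, Finset.mem_sdiff, Finset.mem_univ, true_and]
    have hsymm : ((e₂'.symm a : Fin n) : ℕ) = n - 1 - ((e₁.symm a : Fin n) : ℕ) := by
      simp only [he₂', Equiv.symm_trans_apply, Fin.revPerm_symm, Fin.revPerm_apply, Fin.val_rev]
      omega
    rw [hsymm]
    have := (e₁.symm a).isLt
    omega
  -- upSet e₁ 0 and n
  have h0 : upSet e₁ 0 = Finset.univ := by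
    ext a; simp [mem_upSet]
  have hnn : upSet e₁ n = ∅ := by
    ext a
    simp only [mem_upSet, Finset.notMem_empty, iff_false]
    have := (e₁.symm a).isLt
    omega
  -- step 1: expand LHS
  have step1 : choquetSum μ (fun a => 1 - f a) e₁ =
      μ Finset.univ - ∑ i : Fin n, f (e₁ i) * (μ (upSet e₁ i) - μ (upSet e₁ ((i:ℕ) + 1))) := by
    rw [choquetSum]
    have htel : ∑ i : Fin n, (μ (upSet e₁ (i:ℕ)) - μ (upSet e₁ ((i:ℕ) + 1))) = μ Finset.univ := by
      rw [Fin.sum_univ_eq_sum_range (fun k => μ (upSet e₁ k) - μ (upSet e₁ (k + 1)))]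
      rw [Finset.sum_range_sub' (fun k => μ (upSet e₁ k))]
      rw [h0, hnn, hμ_empty, sub_zero]
    have : ∑ i : Fin n, (1 - f (e₁ i)) * (μ (upSet e₁ (i:ℕ)) - μ (upSet e₁ ((i:ℕ) + 1)))
        = ∑ i : Fin n, ((μ (upSet e₁ (i:ℕ)) - μ (upSet e₁ ((i:ℕ) + 1)))
            - f (e₁ i) * (μ (upSet e₁ (i:ℕ)) - μ (upSet e₁ ((i:ℕ) + 1)))) := by
      apply Finset.sum_congr rfl; intro i _; ring
    rw [this, Finset.sum_sub_distrib, htel]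
  -- step 2: the subtracted sum equals choquetSum over e₂'
  have step2 : ∑ i : Fin n, f (e₁ i) * (μ (upSet e₁ (i:ℕ)) - μ (upSet e₁ ((i:ℕ) + 1)))
      = choquetSum μ f e₂' := by
    rw [choquetSum]
    rw [← Equiv.sum_comp (Fin.revPerm (n := n))
      (fun i => f (e₁ i) * (μ (upSet e₁ (i:ℕ)) - μ (upSet e₁ ((i:ℕ) + 1))))]
    apply Finset.sum_congr rfl
    intro j _
    have hjlt := j.isLt
    rw [hcompl (j:ℕ) (by omega), hcompl ((j:ℕ)+1) (by omega), hdual, hdual]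
    have hrev : ((Fin.revPerm j : Fin n) : ℕ) = n - 1 - (j:ℕ) := by
      simp only [Fin.revPerm_apply, Fin.val_rev]; omega
    have h1 : n - 1 - (j:ℕ) + 1 = n - (j:ℕ) := by omega
    have h2 : n - ((j:ℕ)+1) = n - 1 - (j:ℕ) := by omega
    have hfe : f (e₂' j) = f (e₁ (Fin.revPerm j)) := rfl
    rw [hrev, h1, h2, hfe]
    ring
  have step3 : choquetSum μ f e₂' = choquetSum μ f e₂ :=
    choquetSum_eq_of_monotone μ f e₂' e₂ hsort₂' hsort₂
  rw [step1, step2, step3]
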